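/- For the Tsallis regularizer h(x) = (x - x^q)/(q(1-q)) on [0,∞) with 0 < q < 1, the Bregman divergence satisfies D(0, x) = x^q/q for x > 0, and consequently the Legendre exponent of h at 0 equals 1 - q/2. -/

import Mathlib

open Filter Topology

lemma ratio_eq (q l : ℝ) (hq0 : 0 < q) (x : ℝ) (hx : 0 < x) :
    Real.sqrt (x ^ q / q) / |x - 0| ^ (1 - l)
      = x ^ (q / 2 - (1 - l)) / Real.sqrt q := by
  rw [sub_zero, abs_of_pos hx, Real.sqrt_div (Real.rpow_nonneg hx.le q),
    Real.sqrt_eq_rpow (x ^ q), ← Real.rpow_mul hx.le, div_right_comm,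
    ← Real.rpow_sub hx]
  ring_nf

lemma tendsto_rpow_neg (e : ℝ) (he : e < 0) :
    Tendsto (fun x : ℝ => x ^ e) (nhdsWithin 0 (Set.Ioi 0)) atTop := by
  have h := (tendsto_rpow_atTop (y := -e) (by linarith)).comp tendsto_inv_nhdsGT_zero
  refine h.congr' ?_
  filter_upwards [self_mem_nhdsWithin] with x (hx : 0 < x)
  simp [Function.comp, ← Real.rpow_neg_one, ← Real.rpow_natCast, ← Real.rpow_mul hx.le]

/-- for the Tsallis regularizer `h(x) = (x - x^q)/(q(1-q))` with
`0 < q < 1`, one has `D(0,x) = x^q/q` for `x > 0`, and the Legendre exponent of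
`h` at `0` equals `1 - q/2`. -/
theorem stmt_4 (q : ℝ) (hq0 : 0 < q) (hq1 : q < 1) :
    (∀ x : ℝ, 0 < x →
      ((0:ℝ) - (0:ℝ) ^ q) / (q * (1 - q)) - (x - x ^ q) / (q * (1 - q))
        - (1 - q * x ^ (q - 1)) / (q * (1 - q)) * (0 - x) = x ^ q / q) ∧
    sInf {l : ℝ | l ∈ Set.Icc (0:ℝ) 1 ∧
      ∃ C : ℝ, ∀ᶠ x in nhdsWithin 0 (Set.Ioi 0),
        Real.sqrt (x ^ q / q) / |x - 0| ^ (1 - l) ≤ C} = 1 - q / 2 := by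
  have hq1' : (0:ℝ) < 1 - q := by linarith
  have hden : q * (1 - q) ≠ 0 := (mul_pos hq0 hq1').ne'
  constructor
  · intro x hx
    have h0 : (0:ℝ) ^ q = 0 := Real.zero_rpow hq0.ne'
    have hxq : x ^ (q - 1) * x = x ^ q := by
      rw [← Real.rpow_add_one hx.ne' (q - 1)]; ring_nf
    rw [h0]
    field_simp
    linear_combination (-q) * hxq
  · have hmem : (1 - q / 2) ∈ {l : ℝ | l ∈ Set.Icc (0:ℝ) 1 ∧
        ∃ C : ℝ, ∀ᶠ x in nhdsWithin 0 (Set.Ioi 0),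
          Real.sqrt (x ^ q / q) / |x - 0| ^ (1 - l) ≤ C} := by
      refine ⟨⟨by linarith, by linarith⟩, 1 / Real.sqrt q, ?_⟩
      filter_upwards [self_mem_nhdsWithin] with x (hx : 0 < x)
      rw [ratio_eq q _ hq0 x hx]
      have : q / 2 - (1 - (1 - q / 2)) = 0 := by ring
      rw [this, Real.rpow_zero]
    refine le_antisymm (csInf_le ⟨0, fun l hl => hl.1.1⟩ hmem) (le_csInf ⟨_, hmem⟩ ?_)
    rintro l ⟨⟨hl0, hl1⟩, C, hC⟩
    by_contra hlt
    push_neg at hlt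
    have he : q / 2 - (1 - l) < 0 := by linarith
    have htop : Tendsto (fun x : ℝ => x ^ (q / 2 - (1 - l)) / Real.sqrt q)
        (nhdsWithin 0 (Set.Ioi 0)) atTop :=
      (tendsto_rpow_neg _ he).atTop_div_const (Real.sqrt_pos.mpr hq0)
    have h2 := htop.eventually_ge_atTop (C + 1)
    obtain ⟨x, hx1, hx2, (hx3 : 0 < x)⟩ := (hC.and (h2.and self_mem_nhdsWithin)).exists
    rw [ratio_eq q l hq0 x hx3] at hx1
    linarith
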